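/- Let 0 < p < 1, q ≥ 1, ε > 0 be real numbers and let m ≥ 1 be an integer. Then the infimum over x ∈ ℝ^m of the function |Σ_{j=1}^m x_j − 1|^q + (1/2) Σ_{j=1}^m (|x_j| + ε)^p equals c(p,q,ε) + ((m−1)/2)·ε^p, where c(p,q,ε) = min_{z∈ℝ} (|1−z|^q + (1/2)(|z|+ε)^p); moreover this infimum is attained at vectors with at most one nonzero coordinate, equal to the minimizer of g_ε. -/

import Mathlib

lemma my_submod (p eps : ℝ) (hp0 : 0 < p) (hp1 : p < 1) (he : 0 < eps)
    (x y : ℝ) (hx : 0 ≤ x) (hy : 0 ≤ y) :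
    (x + y + eps) ^ p + eps ^ p ≤ (x + eps) ^ p + (y + eps) ^ p := by
  rcases eq_or_lt_of_le (add_nonneg hx hy) with h | h
  · have hx0 : x = 0 := by linarith [abs_nonneg x]
    have hy0 : y = 0 := by linarith
    simp [hx0, hy0]
  · set s := x + y with hs
    have hconc := (Real.strictConcaveOn_rpow hp0 hp1).concaveOn
    set l := x / s with hl
    have hl0 : 0 ≤ l := div_nonneg hx h.le
    have hl1 : l ≤ 1 := by rw [hl, div_le_one h]; linarith
    have h1 := hconc.2 (show s + eps ∈ Set.Ici (0:ℝ) by simp [Set.mem_Ici]; linarith)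
      (show eps ∈ Set.Ici (0:ℝ) by simp [Set.mem_Ici]; linarith)
      hl0 (show (0:ℝ) ≤ 1 - l by linarith) (by ring)
    have h2 := hconc.2 (show s + eps ∈ Set.Ici (0:ℝ) by simp [Set.mem_Ici]; linarith)
      (show eps ∈ Set.Ici (0:ℝ) by simp [Set.mem_Ici]; linarith)
      (show (0:ℝ) ≤ 1 - l by linarith) hl0 (by ring)
    have e1 : l • (s + eps) + (1 - l) • eps = x + eps := by
      simp only [smul_eq_mul]; linarith [(show l * s = x by rw [hl]; field_simp [h.ne'])]
    have e2 : (1 - l) • (s + eps) + l • eps = y + eps := by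
      have : (1 - l) * s = y := by field_simp [hl]; linarith [(show l * s = x by rw [hl]; field_simp [h.ne'])]
      simp only [smul_eq_mul] at *; nlinarith
    rw [e1] at h1; rw [e2] at h2
    simp only [smul_eq_mul] at h1 h2
    nlinarith

lemma my_sum_bound (p eps : ℝ) (hp0 : 0 < p) (hp1 : p < 1) (he : 0 < eps)
    {ι : Type*} (s : Finset ι) (hs : s.Nonempty) (a : ι → ℝ)
    (ha : ∀ i ∈ s, 0 ≤ a i) :
    ((∑ i ∈ s, a i) + eps) ^ p + ((s.card : ℝ) - 1) * eps ^ p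
      ≤ ∑ i ∈ s, (a i + eps) ^ p := by
  induction hs using Finset.Nonempty.cons_induction with
  | singleton i => simp
  | cons i t hit ht ih =>
    have ha' : ∀ j ∈ t, 0 ≤ a j := fun j hj => ha j (Finset.mem_cons_of_mem hj)
    have hT : 0 ≤ ∑ j ∈ t, a j := Finset.sum_nonneg ha'
    have ih' := ih ha'
    have hsub := my_submod p eps hp0 hp1 he (a i) (∑ j ∈ t, a j)
      (ha i (Finset.mem_cons_self i t)) hT
    rw [Finset.sum_cons, Finset.sum_cons, Finset.card_cons]
    push_cast
    nlinarith

/-- If `z*` minimizes `g_ε(z) = |1 − z|^q + (1/2)(|z| + ε)^p` over ℝ, then the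
infimum over `x ∈ ℝ^m` of `|Σ_j x_j − 1|^q + (1/2) Σ_j (|x_j| + ε)^p` equals
`c(p,q,ε) + ((m−1)/2)·ε^p` where `c(p,q,ε) = g_ε(z*)`, and it is attained at
each vector with at most one nonzero coordinate equal to `z*`. -/
theorem stmt_13 (p q eps : ℝ) (m : ℕ) (hm : 1 ≤ m) (hp0 : 0 < p) (hp1 : p < 1)
    (hq : 1 ≤ q) (heps : 0 < eps) (zs : ℝ)
    (hzs : ∀ y : ℝ,
      |1 - zs| ^ q + (1 / 2) * (|zs| + eps) ^ p ≤
        |1 - y| ^ q + (1 / 2) * (|y| + eps) ^ p) :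
    IsLeast
      (Set.range fun x : Fin m → ℝ =>
        |(∑ j, x j) - 1| ^ q + (1 / 2) * ∑ j, (|x j| + eps) ^ p)
      (|1 - zs| ^ q + (1 / 2) * (|zs| + eps) ^ p + ((m : ℝ) - 1) / 2 * eps ^ p) ∧
    ∀ j : Fin m,
      |(∑ i, (Pi.single j zs : Fin m → ℝ) i) - 1| ^ q +
          (1 / 2) * ∑ i, (|(Pi.single j zs : Fin m → ℝ) i| + eps) ^ p =
        |1 - zs| ^ q + (1 / 2) * (|zs| + eps) ^ p + ((m : ℝ) - 1) / 2 * eps ^ p := by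
  haveI : NeZero m := ⟨by omega⟩
  have key : ∀ j : Fin m,
      |(∑ i, (Pi.single j zs : Fin m → ℝ) i) - 1| ^ q +
          (1 / 2) * ∑ i, (|(Pi.single j zs : Fin m → ℝ) i| + eps) ^ p =
        |1 - zs| ^ q + (1 / 2) * (|zs| + eps) ^ p + ((m : ℝ) - 1) / 2 * eps ^ p := by
    intro j
    have hsum1 : ∑ i, (Pi.single j zs : Fin m → ℝ) i = zs := by
      rw [Finset.sum_pi_single']
      simp
    have hsum2 : ∑ i, (|(Pi.single j zs : Fin m → ℝ) i| + eps) ^ p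
        = (|zs| + eps) ^ p + ((m : ℝ) - 1) * eps ^ p := by
      rw [← Finset.sum_erase_add _ _ (Finset.mem_univ j)]
      have h1 : ∀ i ∈ Finset.univ.erase j,
          (|(Pi.single j zs : Fin m → ℝ) i| + eps) ^ p = eps ^ p := by
        intro i hi
        rw [Pi.single_eq_of_ne (Finset.ne_of_mem_erase hi)]
        simp
      rw [Finset.sum_congr rfl h1, Finset.sum_const, Pi.single_eq_same,
        Finset.card_erase_of_mem (Finset.mem_univ j), Finset.card_univ,
        Fintype.card_fin, nsmul_eq_mul, Nat.cast_sub hm]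
      push_cast; ring
    rw [hsum1, hsum2, abs_sub_comm]
    ring
  refine ⟨⟨⟨Pi.single (0 : Fin m) zs, key 0⟩, ?_⟩, key⟩
  rintro v ⟨x, rfl⟩
  simp only
  set S := ∑ j, x j with hS
  set A := ∑ j, |x j| with hA
  have hEne : (Finset.univ : Finset (Fin m)).Nonempty := Finset.univ_nonempty
  have h1 : (A + eps) ^ p + ((m : ℝ) - 1) * eps ^ p ≤ ∑ j, (|x j| + eps) ^ p := by
    have := my_sum_bound p eps hp0 hp1 heps Finset.univ hEne (fun j => |x j|)
      (fun i _ => abs_nonneg _)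
    simpa [Finset.card_univ, Fintype.card_fin] using this
  have hSA : |S| ≤ A := Finset.abs_sum_le_sum_abs _ _
  have h2 : (|S| + eps) ^ p ≤ (A + eps) ^ p :=
    Real.rpow_le_rpow (by positivity) (by linarith) hp0.le
  have h3 := hzs S
  rw [abs_sub_comm S 1]
  nlinarith [h3, h1, h2]
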